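/- arXiv:1906.11497 — 8 statements merged into one kernel-verified Lean document; each statement's English description precedes it below -/
import Mathlib

section
/- Let G be a graph, B an independent set of G, and v ∈ B. If for every neighbor x of v the intersection B ∩ N(x) is not equal to {v}, then G is not a W₂ graph. -/
open SimpleGraph

/-- The circulant graph `C_n(S)` on `ℤ/nℤ`: vertices `i, j` are adjacent iff
`min{|i−j|, n−|i−j|} ∈ S`, i.e. iff `i − j` or `j − i` is congruent mod `n`
to an element of `S ⊆ {1, …, ⌊n/2⌋}`. -/
def circ (n : ℕ) (S : Set ℕ) : SimpleGraph (ZMod n) :=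
  SimpleGraph.circulantGraph ((fun s : ℕ => (s : ZMod n)) '' S)

/-- `s` is an independent set of `G`. -/
def IsIndep {V : Type*} (G : SimpleGraph V) (s : Finset V) : Prop :=
  ∀ ⦃u⦄, u ∈ s → ∀ ⦃w⦄, w ∈ s → ¬ G.Adj u w

/-- The independence number `α(G)`. -/
noncomputable def indepNum {V : Type*} [Fintype V] (G : SimpleGraph V) : ℕ :=
  sSup {k | ∃ s : Finset V, IsIndep G s ∧ s.card = k}

/-- `G` is a W₂ graph: it has at least two vertices and every pair of disjoint
independent sets is contained in a pair of disjoint maximum independent sets. -/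
def IsW2 {V : Type*} [Fintype V] (G : SimpleGraph V) : Prop :=
  2 ≤ Fintype.card V ∧
  ∀ A B : Finset V, IsIndep G A → IsIndep G B → Disjoint A B →
    ∃ A' B' : Finset V, A ⊆ A' ∧ B ⊆ B' ∧ Disjoint A' B' ∧
      IsIndep G A' ∧ IsIndep G B' ∧ A'.card = _root_.indepNum G ∧ B'.card = _root_.indepNum G

/-- The disjoint union of `d` copies of the graph `G`. -/
def copies {V : Type*} (d : ℕ) (G : SimpleGraph V) : SimpleGraph (Fin d × V) where
  Adj p q := p.1 = q.1 ∧ G.Adj p.2 q.2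
  symm := ⟨fun p q h => ⟨h.1.symm, h.2.symm⟩⟩
  loopless := ⟨fun p h => G.loopless.irrefl _ h.2⟩
theorem stmt_0 {V : Type*} [Fintype V] (G : SimpleGraph V) (B : Finset V)
    (hB : IsIndep G B) (v : V) (hv : v ∈ B)
    (h : ∀ x : V, G.Adj v x → (↑B : Set V) ∩ G.neighborSet x ≠ {v}) :
    ¬ IsW2 G := by
  classical
  rintro ⟨-, hW⟩
  obtain ⟨A', B', hA'sub, hB'sub, hdisj, hA'ind, hB'ind, hA'card, hB'card⟩ :=
    hW {v} (B.erase v)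
      (by intro u hu w hw hadj
          rw [Finset.mem_singleton] at hu hw
          subst hu; subst hw; exact G.loopless.irrefl _ hadj)
      (fun u hu w hw => hB (Finset.mem_of_mem_erase hu) (Finset.mem_of_mem_erase hw))
      (Finset.disjoint_singleton_left.mpr (Finset.notMem_erase v B))
  have hvA' : v ∈ A' := hA'sub (Finset.mem_singleton_self v)
  have hvB' : v ∉ B' := fun hmem => (Finset.disjoint_left.mp hdisj hvA') hmem
  -- no element of B' is adjacent to v
  have key : ∀ x ∈ B', ¬ G.Adj v x := by
    intro x hx hadj
    have hne := h x hadj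
    have hvmem : v ∈ (↑B : Set V) ∩ G.neighborSet x :=
      ⟨hv, G.mem_neighborSet x v |>.mpr hadj.symm⟩
    have : ∃ y, y ∈ (↑B : Set V) ∩ G.neighborSet x ∧ y ≠ v := by
      by_contra hc
      push_neg at hc
      exact hne (Set.eq_singleton_iff_unique_mem.mpr ⟨hvmem, fun y hy => hc y hy⟩)
    obtain ⟨y, ⟨hyB, hyN⟩, hyv⟩ := this
    have hyB' : y ∈ B' := hB'sub (Finset.mem_erase.mpr ⟨hyv, hyB⟩)
    exact hB'ind hx hyB' ((G.mem_neighborSet x y).mp hyN)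
  -- insert v B' is independent
  have hind : IsIndep G (insert v B') := by
    intro u hu w hw hadj
    rcases Finset.mem_insert.mp hu with rfl | hu
    · rcases Finset.mem_insert.mp hw with rfl | hw
      · exact G.loopless.irrefl _ hadj
      · exact key w hw hadj
    · rcases Finset.mem_insert.mp hw with hw | hw
      · exact key u hu (hw ▸ hadj).symm
      · exact hB'ind hu hw hadj
  have hbdd : BddAbove {k | ∃ s : Finset V, IsIndep G s ∧ s.card = k} := by
    refine ⟨Fintype.card V, ?_⟩
    rintro k ⟨s, -, rfl⟩
    simpa using Finset.card_le_card (Finset.subset_univ s)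
  have hle : (insert v B').card ≤ _root_.indepNum G :=
    le_csSup hbdd ⟨insert v B', hind, rfl⟩
  rw [Finset.card_insert_of_notMem hvB', hB'card] at hle
  omega
end

section
/- For n ≥ 5, the circulant graph C_n(1,2) is a W₂ graph if and only if n ∈ {5, 7, 8}. -/
open SimpleGraph

section Aux

variable {n : ℕ} [NeZero n]

/-- Decidable pairwise-nonadjacency predicate. -/
def pind (n : ℕ) [NeZero n] (u v : ZMod n) : Prop :=
  ¬(u - v = 1 ∨ u - v = 2 ∨ v - u = 1 ∨ v - u = 2)

instance (u v : ZMod n) : Decidable (pind n u v) :=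
  inferInstanceAs (Decidable ¬_)

lemma circ_adj_iff (u v : ZMod n) :
    (circ n {1, 2}).Adj u v ↔ u ≠ v ∧ (u - v = 1 ∨ u - v = 2 ∨ v - u = 1 ∨ v - u = 2) := by
  show (SimpleGraph.fromRel _).Adj u v ↔ _
  rw [SimpleGraph.fromRel_adj]
  simp only [Set.image_insert_eq, Set.image_singleton, Set.mem_insert_iff,
    Set.mem_singleton_iff, Nat.cast_one, Nat.cast_ofNat]
  tauto

lemma int_cast_ne_zero {d : ℤ} (hd : 0 < d) (hdn : d < n) : ((d : ℤ) : ZMod n) ≠ 0 := by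
  rw [Ne, ZMod.intCast_zmod_eq_zero_iff_dvd]
  intro h
  have := Int.le_of_dvd hd h
  omega

lemma adj_of_sub_one (hn : 5 ≤ n) {u v : ZMod n} (h : u - v = 1) :
    (circ n {1, 2}).Adj u v := by
  rw [circ_adj_iff]
  refine ⟨fun he => ?_, Or.inl h⟩
  apply int_cast_ne_zero (n := n) (d := 1) one_pos (by omega)
  push_cast
  rw [← h, he, sub_self]

lemma adj_of_sub_two (hn : 5 ≤ n) {u v : ZMod n} (h : u - v = 2) :
    (circ n {1, 2}).Adj u v := by
  rw [circ_adj_iff]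
  refine ⟨fun he => ?_, Or.inr (Or.inl h)⟩
  apply int_cast_ne_zero (n := n) (d := 2) two_pos (by omega)
  push_cast
  rw [← h, he, sub_self]

lemma pind_iff (hn : 5 ≤ n) (u v : ZMod n) :
    pind n u v ↔ ¬ (circ n {1, 2}).Adj u v := by
  rw [circ_adj_iff, pind]
  constructor
  · exact fun h hc => h hc.2
  · intro h hD
    refine h ⟨?_, hD⟩
    rintro rfl
    rw [sub_self] at hD
    have h1 : ((1 : ℤ) : ZMod n) ≠ 0 := int_cast_ne_zero one_pos (by omega)
    have h2 : ((2 : ℤ) : ZMod n) ≠ 0 := int_cast_ne_zero two_pos (by omega)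
    push_cast at h1 h2
    rcases hD with h' | h' | h' | h' <;> simp_all

lemma mem_image_add_iff {S : Finset (ZMod n)} {t x : ZMod n} :
    x ∈ S.image (· + t) ↔ x - t ∈ S := by
  simp only [Finset.mem_image]
  constructor
  · rintro ⟨a, ha, rfl⟩
    simpa using ha
  · intro h
    exact ⟨x - t, h, by ring⟩

lemma notin_U {S : Finset (ZMod n)} {y : ZMod n}
    (h0 : y ∉ S) (h1 : y - 1 ∉ S) (h2 : y - 2 ∉ S) :
    y ∉ S ∪ S.image (· + 1) ∪ S.image (· + 2) := by
  intro hy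
  rcases Finset.mem_union.mp hy with hy' | hy'
  · rcases Finset.mem_union.mp hy' with hy'' | hy''
    · exact h0 hy''
    · exact h1 (mem_image_add_iff.mp hy'')
  · exact h2 (mem_image_add_iff.mp hy')

lemma card_U (hn : 5 ≤ n) {S : Finset (ZMod n)} (hS : IsIndep (circ n {1, 2}) S) :
    (S ∪ S.image (· + 1) ∪ S.image (· + 2)).card = 3 * S.card := by
  have h01 : Disjoint S (S.image (· + 1)) := by
    rw [Finset.disjoint_left]
    intro x hx hx1
    exact hS hx (mem_image_add_iff.mp hx1) (adj_of_sub_one hn (by ring))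
  have h02 : Disjoint S (S.image (· + 2)) := by
    rw [Finset.disjoint_left]
    intro x hx hx1
    exact hS hx (mem_image_add_iff.mp hx1) (adj_of_sub_two hn (by ring))
  have h12 : Disjoint (S.image (· + 1)) (S.image (· + 2)) := by
    rw [Finset.disjoint_left]
    intro x hx hx1
    exact hS (mem_image_add_iff.mp hx) (mem_image_add_iff.mp hx1)
      (adj_of_sub_one hn (by ring))
  rw [Finset.card_union_of_disjoint (Finset.disjoint_union_left.mpr ⟨h02, h12⟩),
    Finset.card_union_of_disjoint h01,
    Finset.card_image_of_injective _ (add_left_injective _),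
    Finset.card_image_of_injective _ (add_left_injective _)]
  ring

lemma indep_card_le (hn : 5 ≤ n) {S : Finset (ZMod n)} (hS : IsIndep (circ n {1, 2}) S) :
    S.card ≤ n / 3 := by
  have h := card_U hn hS
  have h2 := Finset.card_le_univ (S ∪ S.image (· + 1) ∪ S.image (· + 2))
  rw [ZMod.card] at h2
  omega

lemma U_missing (hn : 5 ≤ n) {S : Finset (ZMod n)} (hS : IsIndep (circ n {1, 2}) S)
    (hcard : S.card = n / 3) (Y : Finset (ZMod n))
    (hY : ∀ y ∈ Y, y ∉ S ∪ S.image (· + 1) ∪ S.image (· + 2)) :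
    Y.card + 3 * (n / 3) ≤ n := by
  have hsub : Y ⊆ (S ∪ S.image (· + 1) ∪ S.image (· + 2))ᶜ := fun y hy =>
    Finset.mem_compl.mpr (hY y hy)
  have h := Finset.card_le_card hsub
  rw [Finset.card_compl, card_U hn hS, hcard, ZMod.card] at h
  omega

end Aux
section Cases

variable {n : ℕ} [NeZero n]

lemma ne_of_gap {x y : ZMod n} (d : ℤ) (hd : 0 < d) (hdn : d < n)
    (h : y - x = ((d : ℤ) : ZMod n)) : x ≠ y := by
  rintro rfl
  rw [sub_self] at h
  exact int_cast_ne_zero hd hdn h.symm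

lemma case0 (hn : 6 ≤ n) {S : Finset (ZMod n)} (hS : IsIndep (circ n {1, 2}) S)
    (hcard : S.card = n / 3) (hmod : n % 3 = 0) (h0 : (0 : ZMod n) ∈ S) :
    (3 : ZMod n) ∈ S := by
  have hn5 : 5 ≤ n := by omega
  by_contra h3
  have m3 : (3 : ZMod n) ∉ S ∪ S.image (· + 1) ∪ S.image (· + 2) := by
    refine notin_U h3 (fun h => ?_) (fun h => ?_)
    · exact hS h h0 (adj_of_sub_two hn5 (by ring_nf))
    · exact hS h h0 (adj_of_sub_one hn5 (by ring_nf))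
  have := U_missing hn5 hS hcard {3} (by simpa using m3)
  simp only [Finset.card_singleton] at this
  omega

lemma case1 (hn : 10 ≤ n) {S : Finset (ZMod n)} (hS : IsIndep (circ n {1, 2}) S)
    (hcard : S.card = n / 3) (hmod : n % 3 = 1) (h0 : (0 : ZMod n) ∈ S)
    (h4 : (4 : ZMod n) ∈ S) : (7 : ZMod n) ∈ S := by
  have hn5 : 5 ≤ n := by omega
  by_contra h7
  have m3 : (3 : ZMod n) ∉ S ∪ S.image (· + 1) ∪ S.image (· + 2) := by
    refine notin_U (fun h => ?_) (fun h => ?_) (fun h => ?_)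
    · exact hS h4 h (adj_of_sub_one hn5 (by ring_nf))
    · exact hS h h0 (adj_of_sub_two hn5 (by ring_nf))
    · exact hS h h0 (adj_of_sub_one hn5 (by ring_nf))
  have m7 : (7 : ZMod n) ∉ S ∪ S.image (· + 1) ∪ S.image (· + 2) := by
    refine notin_U h7 (fun h => ?_) (fun h => ?_)
    · exact hS h h4 (adj_of_sub_two hn5 (by ring_nf))
    · exact hS h h4 (adj_of_sub_one hn5 (by ring_nf))
  have hne : (3 : ZMod n) ≠ 7 :=
    ne_of_gap 4 (by norm_num) (by omega) (by push_cast; norm_num)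
  have := U_missing hn5 hS hcard {3, 7} ?_
  · rw [Finset.card_pair hne] at this
    omega
  · intro y hy
    rcases Finset.mem_insert.mp hy with rfl | hy
    · exact m3
    · rw [Finset.mem_singleton.mp hy]
      exact m7

lemma case2 (hn : 11 ≤ n) {S : Finset (ZMod n)} (hS : IsIndep (circ n {1, 2}) S)
    (hcard : S.card = n / 3) (hmod : n % 3 = 2) (h3 : (3 : ZMod n) ∈ S)
    (hm3 : (-3 : ZMod n) ∈ S) : (0 : ZMod n) ∈ S := by
  have hn5 : 5 ≤ n := by omega
  by_contra h0
  have m0 : (0 : ZMod n) ∉ S ∪ S.image (· + 1) ∪ S.image (· + 2) := by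
    refine notin_U h0 (fun h => ?_) (fun h => ?_)
    · exact hS h hm3 (adj_of_sub_two hn5 (by ring_nf))
    · exact hS h hm3 (adj_of_sub_one hn5 (by ring_nf))
  have m1 : (1 : ZMod n) ∉ S ∪ S.image (· + 1) ∪ S.image (· + 2) := by
    refine notin_U (fun h => ?_) (fun h => ?_) (fun h => ?_)
    · exact hS h3 h (adj_of_sub_two hn5 (by ring_nf))
    · rw [show (1 : ZMod n) - 1 = 0 by ring] at h
      exact h0 h
    · exact hS h hm3 (adj_of_sub_two hn5 (by ring_nf))
  have m2 : (2 : ZMod n) ∉ S ∪ S.image (· + 1) ∪ S.image (· + 2) := by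
    refine notin_U (fun h => ?_) (fun h => ?_) (fun h => ?_)
    · exact hS h3 h (adj_of_sub_one hn5 (by ring_nf))
    · exact hS h3 h (adj_of_sub_two hn5 (by ring_nf))
    · rw [show (2 : ZMod n) - 2 = 0 by ring] at h
      exact h0 h
  have h01 : (0 : ZMod n) ≠ 1 :=
    ne_of_gap 1 (by norm_num) (by omega) (by push_cast; norm_num)
  have h02 : (0 : ZMod n) ≠ 2 :=
    ne_of_gap 2 (by norm_num) (by omega) (by push_cast; norm_num)
  have h12 : (1 : ZMod n) ≠ 2 :=
    ne_of_gap 1 (by norm_num) (by omega) (by push_cast; norm_num)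
  have := U_missing hn5 hS hcard {0, 1, 2} ?_
  · rw [Finset.card_insert_of_notMem (by simp [h01, h02]), Finset.card_pair h12] at this
    omega
  · intro y hy
    rcases Finset.mem_insert.mp hy with rfl | hy
    · exact m0
    · rcases Finset.mem_insert.mp hy with rfl | hy
      · exact m1
      · rw [Finset.mem_singleton.mp hy]
        exact m2

end Cases
section MaxInd

variable {n : ℕ} [NeZero n]

lemma exists_max (hn : 5 ≤ n) :
    ∃ S : Finset (ZMod n), IsIndep (circ n {1, 2}) S ∧ S.card = n / 3 := by
  have h3 : 3 * (n / 3) ≤ n := by omega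
  refine ⟨(Finset.range (n / 3)).image (fun i => ((3 * i : ℕ) : ZMod n)), ?_, ?_⟩
  · have key : ∀ i j c : ℕ, i < n / 3 → j < n / 3 → 0 < c → c < 3 →
        ((3 * i : ℕ) : ZMod n) - ((3 * j : ℕ) : ZMod n) ≠ ((c : ℕ) : ZMod n) := by
      intro i j c hi hj hc1 hc2 he
      have hz : (((3 * i : ℤ) - 3 * j - c : ℤ) : ZMod n) = 0 := by
        push_cast
        push_cast at he
        linear_combination he
      rw [ZMod.intCast_zmod_eq_zero_iff_dvd] at hz
      have := Int.eq_zero_of_abs_lt_dvd hz (by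
        rw [abs_lt]
        constructor <;> push_cast <;> omega)
      omega
    intro u hu w hw hadj
    simp only [Finset.mem_image, Finset.mem_range] at hu hw
    obtain ⟨i, hi, rfl⟩ := hu
    obtain ⟨j, hj, rfl⟩ := hw
    rw [circ_adj_iff] at hadj
    rcases hadj.2 with h | h | h | h
    · exact key i j 1 hi hj (by norm_num) (by norm_num) (by exact_mod_cast h)
    · exact key i j 2 hi hj (by norm_num) (by norm_num) (by exact_mod_cast h)
    · exact key j i 1 hj hi (by norm_num) (by norm_num) (by exact_mod_cast h)
    · exact key j i 2 hj hi (by norm_num) (by norm_num) (by exact_mod_cast h)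
  · rw [Finset.card_image_of_injOn, Finset.card_range]
    intro i hi j hj he
    simp only [Finset.coe_range, Set.mem_Iio] at hi hj
    have he' : ((3 * i : ℕ) : ZMod n) = ((3 * j : ℕ) : ZMod n) := he
    have hvi := ZMod.val_cast_of_lt (n := n) (a := 3 * i) (by omega)
    have hvj := ZMod.val_cast_of_lt (n := n) (a := 3 * j) (by omega)
    have : (3 * i : ℕ) = 3 * j := by rw [← hvi, ← hvj, he']
    omega

lemma indepNum_eq (hn : 5 ≤ n) : _root_.indepNum (circ n {1, 2}) = n / 3 := by
  apply IsGreatest.csSup_eq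
  constructor
  · obtain ⟨S, hS, hc⟩ := exists_max hn
    exact ⟨S, hS, hc⟩
  · rintro k ⟨S, hS, rfl⟩
    exact indep_card_le hn hS

lemma indep_single (x : ZMod n) : IsIndep (circ n {1, 2}) {x} := by
  intro u hu w hw
  rw [Finset.mem_singleton] at hu hw
  subst hu; subst hw
  exact (circ n {1, 2}).loopless.irrefl _

lemma indep_pair {p q : ZMod n} (h : ¬ (circ n {1, 2}).Adj p q) :
    IsIndep (circ n {1, 2}) {p, q} := by
  intro u hu w hw
  simp only [Finset.mem_insert, Finset.mem_singleton] at hu hw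
  rcases hu with rfl | rfl <;> rcases hw with rfl | rfl
  · exact (circ n {1, 2}).loopless.irrefl _
  · exact h
  · exact fun ha => h ha.symm
  · exact (circ n {1, 2}).loopless.irrefl _

lemma pair_rep {A : Finset (ZMod n)} (h1 : A.Nonempty) (h2 : A.card ≤ 2) :
    ∃ a b, A = {a, b} := by
  have h1' : 1 ≤ A.card := Finset.card_pos.mpr h1
  rcases (by omega : A.card = 1 ∨ A.card = 2) with h | h
  · obtain ⟨a, rfl⟩ := Finset.card_eq_one.mp h
    exact ⟨a, a, by simp⟩
  · obtain ⟨a, b, _, rfl⟩ := Finset.card_eq_two.mp h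
    exact ⟨a, b, rfl⟩

end MaxInd

/-- element-wise decidable formulation of the W₂ extension property for pairs. -/
def W2aux (n k : ℕ) [NeZero n] : Prop :=
  ∀ a b c d : ZMod n, pind n a b → pind n c d → (a ≠ c ∧ a ≠ d ∧ b ≠ c ∧ b ≠ d) →
    ∃ p q, ((a = p ∨ a = q) ∧ (b = p ∨ b = q)) ∧ pind n p q ∧
      ({p, q} : Finset (ZMod n)).card = k ∧
      ∃ r s, ((c = r ∨ c = s) ∧ (d = r ∨ d = s)) ∧ pind n r s ∧
        ({r, s} : Finset (ZMod n)).card = k ∧ (p ≠ r ∧ p ≠ s ∧ q ≠ r ∧ q ≠ s)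

section Glue

variable {n : ℕ} [NeZero n]

lemma isW2_of_aux (hn : 5 ≤ n) (hk : n / 3 ≤ 2) (haux : W2aux n (n / 3)) :
    IsW2 (circ n {1, 2}) := by
  constructor
  · rw [ZMod.card]; omega
  intro A B hA hB hAB
  -- enlarge A to a nonempty independent set disjoint from B
  obtain ⟨A₁, hA₁sub, hA₁, hA₁B, hA₁ne, hA₁c⟩ :
      ∃ A₁, A ⊆ A₁ ∧ IsIndep (circ n {1, 2}) A₁ ∧ Disjoint A₁ B ∧ A₁.Nonempty ∧ A₁.card ≤ 2 := by
    rcases A.eq_empty_or_nonempty with rfl | hne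
    · have hBc : B.card ≤ 2 := le_trans (indep_card_le hn hB) hk
      have hc : (Bᶜ : Finset (ZMod n)).Nonempty := by
        rw [← Finset.card_pos, Finset.card_compl, ZMod.card]; omega
      obtain ⟨a, ha⟩ := hc
      refine ⟨{a}, by simp, indep_single a, ?_, ⟨a, by simp⟩, by simp⟩
      rw [Finset.disjoint_singleton_left]
      exact Finset.mem_compl.mp ha
    · exact ⟨A, subset_rfl, hA, hAB, hne, le_trans (indep_card_le hn hA) hk⟩
  obtain ⟨B₁, hB₁sub, hB₁, hA₁B₁, hB₁ne, hB₁c⟩ :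
      ∃ B₁, B ⊆ B₁ ∧ IsIndep (circ n {1, 2}) B₁ ∧ Disjoint A₁ B₁ ∧ B₁.Nonempty ∧ B₁.card ≤ 2 := by
    rcases B.eq_empty_or_nonempty with rfl | hne
    · have hc : (A₁ᶜ : Finset (ZMod n)).Nonempty := by
        rw [← Finset.card_pos, Finset.card_compl, ZMod.card]; omega
      obtain ⟨a, ha⟩ := hc
      refine ⟨{a}, by simp, indep_single a, ?_, ⟨a, by simp⟩, by simp⟩
      rw [Finset.disjoint_singleton_right]
      exact Finset.mem_compl.mp ha
    · exact ⟨B, subset_rfl, hB, hA₁B, hne, le_trans (indep_card_le hn hB) hk⟩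
  obtain ⟨a, b, rfl⟩ := pair_rep hA₁ne hA₁c
  obtain ⟨c, d, rfl⟩ := pair_rep hB₁ne hB₁c
  have hma : a ∈ ({a, b} : Finset (ZMod n)) := by simp
  have hmb : b ∈ ({a, b} : Finset (ZMod n)) := by simp
  have hmc : c ∈ ({c, d} : Finset (ZMod n)) := by simp
  have hmd : d ∈ ({c, d} : Finset (ZMod n)) := by simp
  have hpab : pind n a b := (pind_iff hn a b).mpr (fun hadj => hA₁ hma hmb hadj)
  have hpcd : pind n c d := (pind_iff hn c d).mpr (fun hadj => hB₁ hmc hmd hadj)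
  have hdisj4 : a ≠ c ∧ a ≠ d ∧ b ≠ c ∧ b ≠ d := by
    have h := Finset.disjoint_left.mp hA₁B₁
    exact ⟨fun he => h hma (he ▸ hmc), fun he => h hma (he ▸ hmd),
      fun he => h hmb (he ▸ hmc), fun he => h hmb (he ▸ hmd)⟩
  obtain ⟨p, q, hcov, hp, hpc, r, s, hcov', hr, hrc, hdj⟩ := haux a b c d hpab hpcd hdisj4
  refine ⟨{p, q}, {r, s}, ?_, ?_, ?_, indep_pair ((pind_iff hn p q).mp hp),
    indep_pair ((pind_iff hn r s).mp hr), ?_, ?_⟩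
  · intro x hx
    rcases Finset.mem_insert.mp (hA₁sub hx) with rfl | hx'
    · simp only [Finset.mem_insert, Finset.mem_singleton]; exact hcov.1
    · rw [Finset.mem_singleton.mp hx']
      simp only [Finset.mem_insert, Finset.mem_singleton]; exact hcov.2
  · intro x hx
    rcases Finset.mem_insert.mp (hB₁sub hx) with rfl | hx'
    · simp only [Finset.mem_insert, Finset.mem_singleton]; exact hcov'.1
    · rw [Finset.mem_singleton.mp hx']
      simp only [Finset.mem_insert, Finset.mem_singleton]; exact hcov'.2
  · rw [Finset.disjoint_left]
    intro x hx hx'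
    simp only [Finset.mem_insert, Finset.mem_singleton] at hx hx'
    obtain ⟨h1, h2, h3, h4⟩ := hdj
    rcases hx with rfl | rfl <;> rcases hx' with rfl | rfl <;> simp_all
  · rw [indepNum_eq hn]; exact hpc
  · rw [indepNum_eq hn]; exact hrc

end Glue
set_option synthInstance.maxSize 1024 in
set_option synthInstance.maxHeartbeats 2000000 in
instance (n k : ℕ) [NeZero n] : Decidable (W2aux n k) := by
  unfold W2aux; infer_instance

set_option maxHeartbeats 4000000 in
lemma w2aux5 : W2aux 5 1 := by decide

set_option maxHeartbeats 8000000 in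
lemma w2aux7 : W2aux 7 2 := by decide

set_option maxHeartbeats 40000000 in
lemma w2aux8 : W2aux 8 2 := by decide
theorem stmt_3 (n : ℕ) [NeZero n] (hn : 5 ≤ n) :
    IsW2 (circ n {1, 2}) ↔ n = 5 ∨ n = 7 ∨ n = 8 := by
  constructor
  · intro hW2
    by_contra hcon
    push_neg at hcon
    obtain ⟨h5, h7, h8⟩ := hcon
    obtain ⟨-, hext⟩ := hW2
    have hn5 : 5 ≤ n := hn
    rcases (by omega : n % 3 = 0 ∨ n % 3 = 1 ∨ n % 3 = 2) with hm | hm | hm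
    · -- n ≡ 0 mod 3, n ≥ 6 : A = {0}, B = {3}
      have h03 : (0 : ZMod n) ≠ 3 :=
        ne_of_gap 3 (by norm_num) (by omega) (by push_cast; norm_num)
      obtain ⟨A', B', hsA, hsB, hdisj, hiA, hiB, hcA, _⟩ :=
        hext {0} {3} (indep_single _) (indep_single _) (by simp [Finset.disjoint_singleton_left, Finset.mem_singleton]; exact fun h => h03 h)
      rw [indepNum_eq hn5] at hcA
      have h3A : (3 : ZMod n) ∈ A' := case0 (by omega) hiA hcA hm (hsA (by simp))
      exact Finset.disjoint_left.mp hdisj h3A (hsB (by simp))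
    · -- n ≡ 1 mod 3, n ≥ 10 : A = {0, 4}, B = {3, 7}
      have hn10 : 10 ≤ n := by omega
      have hp04 : pind n 0 4 := by
        intro h
        rcases h with h | h | h | h
        · exact int_cast_ne_zero (n := n) (d := 5) (by norm_num) (by omega)
            (by push_cast; linear_combination -h)
        · exact int_cast_ne_zero (n := n) (d := 6) (by norm_num) (by omega)
            (by push_cast; linear_combination -h)
        · exact int_cast_ne_zero (n := n) (d := 3) (by norm_num) (by omega)
            (by push_cast; linear_combination h)
        · exact int_cast_ne_zero (n := n) (d := 2) (by norm_num) (by omega)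
            (by push_cast; linear_combination h)
      have hp37 : pind n 3 7 := by
        intro h
        rcases h with h | h | h | h
        · exact int_cast_ne_zero (n := n) (d := 5) (by norm_num) (by omega)
            (by push_cast; linear_combination -h)
        · exact int_cast_ne_zero (n := n) (d := 6) (by norm_num) (by omega)
            (by push_cast; linear_combination -h)
        · exact int_cast_ne_zero (n := n) (d := 3) (by norm_num) (by omega)
            (by push_cast; linear_combination h)
        · exact int_cast_ne_zero (n := n) (d := 2) (by norm_num) (by omega)
            (by push_cast; linear_combination h)
      have h03 : (0 : ZMod n) ≠ 3 :=
        ne_of_gap 3 (by norm_num) (by omega) (by push_cast; norm_num)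
      have h07 : (0 : ZMod n) ≠ 7 :=
        ne_of_gap 7 (by norm_num) (by omega) (by push_cast; norm_num)
      have h43 : (4 : ZMod n) ≠ 3 :=
        (ne_of_gap 1 (by norm_num) (by omega) (by push_cast; norm_num)).symm
      have h47 : (4 : ZMod n) ≠ 7 :=
        ne_of_gap 3 (by norm_num) (by omega) (by push_cast; norm_num)
      obtain ⟨A', B', hsA, hsB, hdisj, hiA, hiB, hcA, _⟩ :=
        hext {0, 4} {3, 7} (indep_pair ((pind_iff hn5 0 4).mp hp04))
          (indep_pair ((pind_iff hn5 3 7).mp hp37))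
          (by
            rw [Finset.disjoint_left]
            intro x hx hx'
            simp only [Finset.mem_insert, Finset.mem_singleton] at hx hx'
            rcases hx with rfl | rfl <;> rcases hx' with h | h <;> simp_all)
      rw [indepNum_eq hn5] at hcA
      have h7A : (7 : ZMod n) ∈ A' :=
        case1 hn10 hiA hcA hm (hsA (by simp)) (hsA (by simp))
      exact Finset.disjoint_left.mp hdisj h7A (hsB (by simp))
    · -- n ≡ 2 mod 3, n ≥ 11 : A = {3, -3}, B = {0}
      have hn11 : 11 ≤ n := by omega
      have hp : pind n 3 (-3) := by
        intro h
        rcases h with h | h | h | h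
        · exact int_cast_ne_zero (n := n) (d := 5) (by norm_num) (by omega)
            (by push_cast; linear_combination h)
        · exact int_cast_ne_zero (n := n) (d := 4) (by norm_num) (by omega)
            (by push_cast; linear_combination h)
        · exact int_cast_ne_zero (n := n) (d := 7) (by norm_num) (by omega)
            (by push_cast; linear_combination -h)
        · exact int_cast_ne_zero (n := n) (d := 8) (by norm_num) (by omega)
            (by push_cast; linear_combination -h)
      have h30 : (3 : ZMod n) ≠ 0 :=
        (ne_of_gap 3 (by norm_num) (by omega) (by push_cast; norm_num)).symm
      have hm30 : (-3 : ZMod n) ≠ 0 :=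
        ne_of_gap 3 (by norm_num) (by omega) (by push_cast; ring_nf)
      obtain ⟨A', B', hsA, hsB, hdisj, hiA, hiB, hcA, _⟩ :=
        hext {3, -3} {0} (indep_pair ((pind_iff hn5 3 (-3)).mp hp)) (indep_single _)
          (by
            rw [Finset.disjoint_left]
            intro x hx hx'
            simp only [Finset.mem_insert, Finset.mem_singleton] at hx hx'
            rcases hx with rfl | rfl <;> simp_all)
      rw [indepNum_eq hn5] at hcA
      have h0A : (0 : ZMod n) ∈ A' :=
        case2 hn11 hiA hcA hm (hsA (by simp)) (hsA (by simp))
      exact Finset.disjoint_left.mp hdisj h0A (hsB (by simp))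
  · rintro (rfl | rfl | rfl)
    · exact isW2_of_aux (by norm_num) (by norm_num) w2aux5
    · exact isW2_of_aux (by norm_num) (by norm_num) w2aux7
    · exact isW2_of_aux (by norm_num) (by norm_num) w2aux8
end

section
/- If n = a + 2b with 1 ≤ a < b < n/2 and gcd(n,a,b) = 1, then C_n(a,b) is isomorphic to C_n(1,2). -/
open SimpleGraph

theorem stmt_9 (n a b : ℕ) (ha : 1 ≤ a) (hab : a < b) (hb : 2 * b < n)
    (hn : n = a + 2 * b) (hgcd : Nat.gcd (Nat.gcd n a) b = 1) :
    Nonempty (circ n {a, b} ≃g circ n {1, 2}) := by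
  have h1 : Nat.gcd n b ∣ a := by
    have := Nat.dvd_sub (Nat.gcd_dvd_left n b) ((Nat.gcd_dvd_right n b).mul_left 2)
    have hsub : n - 2 * b = a := by omega
    rwa [hsub] at this
  have hcop : Nat.Coprime b n := by
    have h2 : Nat.gcd n b ∣ 1 :=
      hgcd ▸ Nat.dvd_gcd (Nat.dvd_gcd (Nat.gcd_dvd_left n b) h1) (Nat.gcd_dvd_right n b)
    exact Nat.coprime_comm.mp (Nat.dvd_one.mp h2)
  set u : (ZMod n)ˣ := ZMod.unitOfCoprime b hcop with hu
  have hub : (u : ZMod n) = (b : ℕ) := ZMod.coe_unitOfCoprime b hcop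
  have haz : (a : ZMod n) = -(2 * (b : ZMod n)) := by
    have h0 : ((a + 2 * b : ℕ) : ZMod n) = 0 := by rw [← hn]; exact ZMod.natCast_self n
    push_cast at h0
    linear_combination h0
  set v : ZMod n := ((u⁻¹ : (ZMod n)ˣ) : ZMod n) with hv
  have hvb : v * (b : ZMod n) = 1 := by rw [hv, ← hub]; exact u.inv_mul
  have hva : v * (a : ZMod n) = -2 := by
    rw [haz]
    have : v * -(2 * (b:ZMod n)) = -(2 * (v * b)) := by ring
    rw [this, hvb]; ring
  have key1 : ∀ z : ZMod n, v * z = 1 ↔ z = (b : ZMod n) := by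
    intro z
    constructor
    · intro h
      have := congrArg (fun w => (u : ZMod n) * w) h
      simp only [← mul_assoc, hv] at this
      rw [Units.mul_inv] at this
      simpa [hub] using this
    · rintro rfl; exact hvb
  have key2 : ∀ z : ZMod n, v * z = 2 ↔ z = -(a : ZMod n) := by
    intro z
    constructor
    · intro h
      have := congrArg (fun w => (u : ZMod n) * w) h
      simp only [← mul_assoc, hv] at this
      rw [Units.mul_inv] at this
      simp only [one_mul] at this
      rw [this, haz, hub]; ring
    · rintro rfl
      have : v * -(a:ZMod n) = -(v * a) := by ring
      rw [this, hva]; ring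
  have hvinj : ∀ z w : ZMod n, v * z = v * w ↔ z = w := by
    intro z w
    constructor
    · intro h
      have := congrArg (fun t => (u : ZMod n) * t) h
      simp only [← mul_assoc, hv, Units.mul_inv, one_mul] at this
      exact this
    · rintro rfl; rfl
  refine ⟨⟨⟨fun x => v * x, fun x => (u : ZMod n) * x, ?_, ?_⟩, ?_⟩⟩
  · intro x; simp [hv, ← mul_assoc]
  · intro x; simp [hv, ← mul_assoc]
  · intro x y
    simp only [Equiv.coe_fn_mk, circ, circulantGraph_adj, Set.mem_image,
      Set.mem_insert_iff, Set.mem_singleton_iff]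
    have hsub : v * x - v * y = v * (x - y) := by ring
    have hsub' : v * y - v * x = v * (y - x) := by ring
    constructor
    · rintro ⟨hne, h⟩
      refine ⟨fun hxy => hne (by rw [hxy]), ?_⟩
      rcases h with ⟨s, hs | hs, hsv⟩ | ⟨s, hs | hs, hsv⟩ <;> subst hs
      · -- ↑1 = v*x - v*y, so x - y = b
        left; refine ⟨b, Or.inr rfl, ?_⟩
        have h1' : v * (x - y) = 1 := by rw [← hsub, ← hsv]; norm_num
        exact ((key1 _).mp h1').symm
      · -- ↑2 = v*x - v*y, so x - y = -a, i.e. y - x = a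
        right; refine ⟨a, Or.inl rfl, ?_⟩
        have h1' : v * (x - y) = 2 := by rw [← hsub, ← hsv]; norm_num
        have h2 := (key2 _).mp h1'
        linear_combination h2
      · right; refine ⟨b, Or.inr rfl, ?_⟩
        have h1' : v * (y - x) = 1 := by rw [← hsub', ← hsv]; norm_num
        exact ((key1 _).mp h1').symm
      · left; refine ⟨a, Or.inl rfl, ?_⟩
        have h1' : v * (y - x) = 2 := by rw [← hsub', ← hsv]; norm_num
        have h2 := (key2 _).mp h1'
        linear_combination h2
    · rintro ⟨hne, h⟩
      refine ⟨fun hxy => hne ((hvinj x y).mp hxy), ?_⟩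
      rcases h with ⟨s, hs | hs, hsv⟩ | ⟨s, hs | hs, hsv⟩ <;> subst hs
      · -- ↑a = x - y : then v*(y-x) = 2
        right; refine ⟨2, Or.inr rfl, ?_⟩
        rw [hsub', show y - x = -(x - y) from by ring, ← hsv, mul_neg, hva]
        norm_num
      · -- ↑b = x - y : v*(x-y) = 1
        left; refine ⟨1, Or.inl rfl, ?_⟩
        rw [hsub, ← hsv, hvb]; norm_num
      · -- ↑a = y - x : v*(x-y) = 2
        left; refine ⟨2, Or.inr rfl, ?_⟩
        rw [hsub, show x - y = -(y - x) from by ring, ← hsv, mul_neg, hva]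
        norm_num
      · right; refine ⟨1, Or.inl rfl, ?_⟩
        rw [hsub', ← hsv, hvb]; norm_num
end

section
/- If n = 2a + b with 1 ≤ a < b < n/2 and gcd(n,a,b) = 1, then C_n(a,b) is isomorphic to C_n(1,2). -/
open SimpleGraph

theorem stmt_10 (n a b : ℕ) (ha : 1 ≤ a) (hab : a < b) (hb : 2 * b < n)
    (hn : n = 2 * a + b) (hgcd : Nat.gcd (Nat.gcd n a) b = 1) :
    Nonempty (circ n {a, b} ≃g circ n {1, 2}) := by
  have hdvd : Nat.gcd n a ∣ b := by
    have h1 : Nat.gcd n a ∣ n := Nat.gcd_dvd_left n a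
    have h2 : Nat.gcd n a ∣ 2 * a := Dvd.dvd.mul_left (Nat.gcd_dvd_right n a) 2
    have hbe : b = n - 2 * a := by omega
    rw [hbe]; exact Nat.dvd_sub h1 h2
  have hcop : Nat.Coprime a n := by
    have h3 : Nat.gcd n a ∣ Nat.gcd (Nat.gcd n a) b := Nat.dvd_gcd dvd_rfl hdvd
    rw [hgcd] at h3
    have := Nat.eq_one_of_dvd_one h3
    rwa [Nat.Coprime, Nat.gcd_comm]
  set u : (ZMod n)ˣ := ZMod.unitOfCoprime a hcop with hu
  have huc : (u : ZMod n) = (a : ZMod n) := rfl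
  have hbval : (b : ZMod n) = (u : ZMod n) * (-2) := by
    have h0 : ((2 * a + b : ℕ) : ZMod n) = 0 := by rw [← hn]; exact ZMod.natCast_self n
    push_cast at h0
    rw [huc]; linear_combination h0
  have haval : (a : ZMod n) = (u : ZMod n) * 1 := by rw [huc, mul_one]
  have key : ∀ d : ZMod n,
      ((u⁻¹ : (ZMod n)ˣ) * d ∈ ((fun s : ℕ => (s : ZMod n)) '' {1, 2}) ∨
        -((u⁻¹ : (ZMod n)ˣ) * d) ∈ ((fun s : ℕ => (s : ZMod n)) '' {1, 2})) ↔
      (d ∈ ((fun s : ℕ => (s : ZMod n)) '' {a, b}) ∨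
        -d ∈ ((fun s : ℕ => (s : ZMod n)) '' {a, b})) := by
    intro d
    simp only [Set.image_insert_eq, Set.image_singleton, Set.mem_insert_iff,
      Set.mem_singleton_iff, Nat.cast_one, Nat.cast_two]
    have e1 : ((u⁻¹ : (ZMod n)ˣ) : ZMod n) * d = 1 ↔ d = (a : ZMod n) := by
      rw [Units.inv_mul_eq_iff_eq_mul, haval]
    have e2 : -(((u⁻¹ : (ZMod n)ˣ) : ZMod n) * d) = 1 ↔ -d = (a : ZMod n) := by
      rw [show -(((u⁻¹ : (ZMod n)ˣ) : ZMod n) * d) = ((u⁻¹ : (ZMod n)ˣ) : ZMod n) * (-d) from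
        (mul_neg _ _).symm, Units.inv_mul_eq_iff_eq_mul, haval]
    have e3 : -(((u⁻¹ : (ZMod n)ˣ) : ZMod n) * d) = 2 ↔ d = (b : ZMod n) := by
      rw [show -(((u⁻¹ : (ZMod n)ˣ) : ZMod n) * d) = ((u⁻¹ : (ZMod n)ˣ) : ZMod n) * (-d) from
        (mul_neg _ _).symm, Units.inv_mul_eq_iff_eq_mul]
      constructor
      · intro h; linear_combination -h - hbval
      · intro h; linear_combination -h - hbval
    have e4 : ((u⁻¹ : (ZMod n)ˣ) : ZMod n) * d = 2 ↔ -d = (b : ZMod n) := by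
      rw [Units.inv_mul_eq_iff_eq_mul]
      constructor
      · intro h; linear_combination -h - hbval
      · intro h; linear_combination -h - hbval
    rw [e1, e2, e3, e4]; tauto
  refine ⟨⟨Units.mulLeft u⁻¹, ?_⟩⟩
  intro x y
  show (circ n {1,2}).Adj ((u⁻¹ : (ZMod n)ˣ) * x) ((u⁻¹ : (ZMod n)ˣ) * y) ↔ _
  simp only [circ, circulantGraph, fromRel_adj]
  have hsub : ((u⁻¹ : (ZMod n)ˣ) : ZMod n) * x - ((u⁻¹ : (ZMod n)ˣ) : ZMod n) * y
      = ((u⁻¹ : (ZMod n)ˣ) : ZMod n) * (x - y) := (mul_sub _ _ _).symm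
  have hsub' : ((u⁻¹ : (ZMod n)ˣ) : ZMod n) * y - ((u⁻¹ : (ZMod n)ˣ) : ZMod n) * x
      = -(((u⁻¹ : (ZMod n)ˣ) : ZMod n) * (x - y)) := by ring
  rw [hsub, hsub', key (x - y), show y - x = -(x - y) from (neg_sub x y).symm]
  have hne : ((u⁻¹ : (ZMod n)ˣ) : ZMod n) * x ≠ ((u⁻¹ : (ZMod n)ˣ) : ZMod n) * y ↔ x ≠ y := by
    constructor
    · intro h hxy; exact h (by rw [hxy])
    · intro h hxy; exact h ((Units.mulLeft u⁻¹).injective hxy)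
  rw [hne]
end

section
/- If 1 ≤ a < b < n/2 and C_n(a,b) is a W₂ graph, then at least one of the following holds: n = 2a+b, n = a+2b, n = 2a+3b, n = 3a+2b, 2n = 2a+3b, or 2n = 3a+2b. -/
open SimpleGraph

/- ### Auxiliary lemmas -/

lemma aux_eqn_of_dvd {n u : ℕ} (hn : 0 < n) (hd : n ∣ u) (h0 : 0 < u) (hlt : u < 3 * n) :
    u = n ∨ u = 2 * n := by
  obtain ⟨k, rfl⟩ := hd
  have hk3 : k < 3 := by
    by_contra hk
    push_neg at hk
    have : n * 3 ≤ n * k := Nat.mul_le_mul_left n hk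
    omega
  interval_cases k <;> omega

lemma aux_circ_adj {n : ℕ} (a b : ℕ) (u v : ZMod n) :
    (circ n {a, b}).Adj u v ↔
      u ≠ v ∧ (u - v = (a : ZMod n) ∨ u - v = (b : ZMod n) ∨
        v - u = (a : ZMod n) ∨ v - u = (b : ZMod n)) := by
  unfold circ circulantGraph
  rw [fromRel_adj, Set.image_pair]
  simp only [Set.mem_insert_iff, Set.mem_singleton_iff]
  tauto

lemma aux_adj_of {n a b : ℕ} (ha0 : (a : ZMod n) ≠ 0) (hb0 : (b : ZMod n) ≠ 0) {u v : ZMod n}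
    (h : u - v = (a : ZMod n) ∨ u - v = (b : ZMod n) ∨
      v - u = (a : ZMod n) ∨ v - u = (b : ZMod n)) :
    (circ n {a, b}).Adj u v := by
  rw [aux_circ_adj]
  refine ⟨?_, h⟩
  rcases h with h | h | h | h
  · exact fun he => ha0 (by rw [← h, he, sub_self])
  · exact fun he => hb0 (by rw [← h, he, sub_self])
  · exact fun he => ha0 (by rw [← h, he, sub_self])
  · exact fun he => hb0 (by rw [← h, he, sub_self])

lemma aux_card_le_indepNum {V : Type*} [Fintype V] {G : SimpleGraph V} {s : Finset V}
    (h : IsIndep G s) : s.card ≤ _root_.indepNum G := by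
  apply le_csSup
  · refine ⟨Fintype.card V, ?_⟩
    rintro k ⟨t, -, rfl⟩
    exact t.card_le_univ.trans_eq Finset.card_univ
  · exact ⟨s, h, rfl⟩

lemma aux_mem_of_max {V : Type*} [Fintype V] [DecidableEq V] {G : SimpleGraph V} {S : Finset V}
    (hSi : IsIndep G S) (hScard : S.card = _root_.indepNum G) {x : V}
    (hx : ∀ s ∈ S, ¬ G.Adj x s) : x ∈ S := by
  by_contra hxS
  have hind : IsIndep G (insert x S) := by
    intro u hu w hw hadj
    rcases Finset.mem_insert.mp hu with h | hu'
    · rcases Finset.mem_insert.mp hw with h' | hw'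
      · rw [h, h'] at hadj; exact G.loopless.irrefl x hadj
      · rw [h] at hadj; exact hx w hw' hadj
    · rcases Finset.mem_insert.mp hw with h' | hw'
      · rw [h'] at hadj; exact hx u hu' hadj.symm
      · exact hSi hu' hw' hadj
  have hle := aux_card_le_indepNum hind
  rw [Finset.card_insert_of_notMem hxS, hScard] at hle
  omega

/-- The obstruction mechanism: if `x ∉ A`, `A` is independent, and every neighbor of `x`
is adjacent to some member of `A`, then `G` is not W₂ (via the pair `(A, {x})`). -/
lemma aux_no_ext {V : Type*} [Fintype V] [DecidableEq V] {G : SimpleGraph V}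
    (hW2 : IsW2 G) {A : Finset V} {x : V} (hA : IsIndep G A) (hxA : x ∉ A)
    (hdom : ∀ s, G.Adj x s → ∃ w ∈ A, G.Adj w s) : False := by
  have hBi : IsIndep G ({x} : Finset V) := by
    intro u hu w hw
    rw [Finset.mem_singleton] at hu hw
    rw [hu, hw]
    exact G.loopless.irrefl x
  obtain ⟨S, T, hAS, hBT, hST, hSi, hTi, hScard, hTcard⟩ :=
    hW2.2 A {x} hA hBi (Finset.disjoint_singleton_right.mpr hxA)
  have hxT : x ∈ T := hBT (Finset.mem_singleton_self x)
  have hxS : x ∈ S := by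
    refine aux_mem_of_max hSi hScard ?_
    intro s hs hadj
    obtain ⟨w, hwA, hws⟩ := hdom s hadj
    exact hSi (hAS hwA) hs hws
  exact Finset.disjoint_left.mp hST hxS hxT

theorem stmt_12 (n a b : ℕ) [NeZero n] (ha : 1 ≤ a) (hab : a < b)
    (hb : 2 * b < n) (hgcd : Nat.gcd (Nat.gcd n a) b = 1)
    (hW2 : IsW2 (circ n {a, b})) :
    n = 2 * a + b ∨ n = a + 2 * b ∨ n = 2 * a + 3 * b ∨ n = 3 * a + 2 * b ∨
      2 * n = 2 * a + 3 * b ∨ 2 * n = 3 * a + 2 * b := by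
  have hn : 0 < n := Nat.pos_of_ne_zero (NeZero.ne n)
  by_cases h1 : ((2 * a + b : ℕ) : ZMod n) = 0
  · rw [ZMod.natCast_eq_zero_iff] at h1
    rcases aux_eqn_of_dvd hn h1 (by omega) (by omega) with h | h
    · exact Or.inl h.symm
    · omega
  by_cases h2 : ((a + 2 * b : ℕ) : ZMod n) = 0
  · rw [ZMod.natCast_eq_zero_iff] at h2
    rcases aux_eqn_of_dvd hn h2 (by omega) (by omega) with h | h
    · exact Or.inr (Or.inl h.symm)
    · omega
  by_cases h3 : ((2 * a + 3 * b : ℕ) : ZMod n) = 0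
  · rw [ZMod.natCast_eq_zero_iff] at h3
    rcases aux_eqn_of_dvd hn h3 (by omega) (by omega) with h | h
    · exact Or.inr (Or.inr (Or.inl h.symm))
    · exact Or.inr (Or.inr (Or.inr (Or.inr (Or.inl h.symm))))
  by_cases h4 : ((3 * a + 2 * b : ℕ) : ZMod n) = 0
  · rw [ZMod.natCast_eq_zero_iff] at h4
    rcases aux_eqn_of_dvd hn h4 (by omega) (by omega) with h | h
    · exact Or.inr (Or.inr (Or.inr (Or.inl h.symm)))
    · exact Or.inr (Or.inr (Or.inr (Or.inr (Or.inr h.symm))))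
  exfalso
  -- basic nonvanishing facts
  have hcast : ∀ u : ℕ, 0 < u → u < n → ((u : ℕ) : ZMod n) ≠ 0 := by
    intro u hu0 hun h
    rw [ZMod.natCast_eq_zero_iff] at h
    have := Nat.le_of_dvd hu0 h
    omega
  have ha0 : ((a : ℕ) : ZMod n) ≠ 0 := hcast a (by omega) (by omega)
  have hb0 : ((b : ℕ) : ZMod n) ≠ 0 := hcast b (by omega) (by omega)
  have hx0 : ((a + b : ℕ) : ZMod n) ≠ 0 := hcast (a + b) (by omega) (by omega)
  by_cases h5 : ((2 * a + 2 * b : ℕ) : ZMod n) = 0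
  · -- twin case: N(0) = N(a+b); use A = {0}
    refine aux_no_ext hW2 (A := ({0} : Finset (ZMod n))) (x := ((a + b : ℕ) : ZMod n)) ?_ ?_ ?_
    · intro u hu w hw
      rw [Finset.mem_singleton] at hu hw
      rw [hu, hw]
      exact (circ n {a, b}).loopless.irrefl 0
    · rw [Finset.mem_singleton]; exact hx0
    · intro s hadj
      rw [aux_circ_adj] at hadj
      refine ⟨0, Finset.mem_singleton_self 0, ?_⟩
      rcases hadj.2 with h | h | h | h
      · -- a+b - s = a, so s = b
        exact aux_adj_of ha0 hb0 (Or.inr (Or.inr (Or.inr (by push_cast at h ⊢; linear_combination -h))))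
      · -- a+b - s = b, so s = a
        exact aux_adj_of ha0 hb0 (Or.inr (Or.inr (Or.inl (by push_cast at h ⊢; linear_combination -h))))
      · -- s - (a+b) = a, so s = 2a+b = -b (mod n): 0 - s = b
        exact aux_adj_of ha0 hb0 (Or.inr (Or.inl (by push_cast at h h5 ⊢; linear_combination -h - h5)))
      · -- s - (a+b) = b, so s = a+2b = -a (mod n): 0 - s = a
        exact aux_adj_of ha0 hb0 (Or.inl (by push_cast at h h5 ⊢; linear_combination -h - h5))
  · -- generic case: A = {0, 2a+2b}, x = a+b
    have hnadj : ¬ (circ n {a, b}).Adj 0 ((2 * a + 2 * b : ℕ) : ZMod n) := by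
      rw [aux_circ_adj]
      rintro ⟨hne, h | h | h | h⟩
      · exact h4 (by push_cast at h ⊢; linear_combination -h)
      · exact h3 (by push_cast at h ⊢; linear_combination -h)
      · exact h2 (by push_cast at h ⊢; linear_combination h)
      · exact h1 (by push_cast at h ⊢; linear_combination h)
    have hxne : ((a + b : ℕ) : ZMod n) ≠ ((2 * a + 2 * b : ℕ) : ZMod n) := by
      intro h
      apply hx0
      have : ((2 * a + 2 * b : ℕ) : ZMod n) - ((a + b : ℕ) : ZMod n) = ((a + b : ℕ) : ZMod n) := by
        push_cast; ring
      rw [← this, ← h, sub_self]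
    refine aux_no_ext hW2
      (A := ({0, ((2 * a + 2 * b : ℕ) : ZMod n)} : Finset (ZMod n)))
      (x := ((a + b : ℕ) : ZMod n)) ?_ ?_ ?_
    · intro u hu w hw
      rcases Finset.mem_insert.mp hu with rfl | hu
      · rcases Finset.mem_insert.mp hw with rfl | hw
        · exact (circ n {a, b}).loopless.irrefl 0
        · rw [Finset.mem_singleton] at hw; subst hw; exact hnadj
      · rw [Finset.mem_singleton] at hu; subst hu
        rcases Finset.mem_insert.mp hw with rfl | hw
        · exact fun h => hnadj h.symm
        · rw [Finset.mem_singleton] at hw; subst hw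
          exact (circ n {a, b}).loopless.irrefl _
    · rw [Finset.mem_insert, Finset.mem_singleton]
      rintro (h | h)
      · exact hx0 h
      · exact hxne h
    · intro s hadj
      rw [aux_circ_adj] at hadj
      rcases hadj.2 with h | h | h | h
      · -- a+b - s = a, so s = b : adjacent to 0
        exact ⟨0, Finset.mem_insert_self _ _,
          aux_adj_of ha0 hb0 (Or.inr (Or.inr (Or.inr (by push_cast at h ⊢; linear_combination -h))))⟩
      · -- a+b - s = b, so s = a : adjacent to 0
        exact ⟨0, Finset.mem_insert_self _ _,
          aux_adj_of ha0 hb0 (Or.inr (Or.inr (Or.inl (by push_cast at h ⊢; linear_combination -h))))⟩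
      · -- s - (a+b) = a, so s = 2a+b : adjacent to 2a+2b (difference b)
        refine ⟨((2 * a + 2 * b : ℕ) : ZMod n),
          Finset.mem_insert.mpr (Or.inr (Finset.mem_singleton_self _)), ?_⟩
        exact aux_adj_of ha0 hb0 (Or.inr (Or.inl (by push_cast at h ⊢; linear_combination -h)))
      · -- s - (a+b) = b, so s = a+2b : adjacent to 2a+2b (difference a)
        refine ⟨((2 * a + 2 * b : ℕ) : ZMod n),
          Finset.mem_insert.mpr (Or.inr (Finset.mem_singleton_self _)), ?_⟩
        exact aux_adj_of ha0 hb0 (Or.inl (by push_cast at h ⊢; linear_combination -h))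
end

section
/- If G is a connected graph that is W₂ and not complete, then every vertex of G has degree at least 2. -/
open SimpleGraph

lemma indep_card_le_s17 {V : Type*} [Fintype V] (G : SimpleGraph V) (s : Finset V)
    (hs : IsIndep G s) : s.card ≤ _root_.indepNum G := by
  apply le_csSup
  · exact ⟨Fintype.card V, fun k ⟨t, _, ht⟩ => ht ▸ t.card_le_univ⟩
  · exact ⟨s, hs, rfl⟩

theorem stmt_17 {V : Type*} [Fintype V] (G : SimpleGraph V)
    [DecidableRel G.Adj] (hconn : G.Connected) (hW2 : IsW2 G)
    (hnc : G ≠ ⊤) : ∀ v : V, 2 ≤ G.degree v := by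
  intro v
  classical
  by_contra hlt
  push_neg at hlt
  -- degree at least 1
  obtain ⟨y, hy⟩ := Fintype.exists_ne_of_one_lt_card (lt_of_lt_of_le one_lt_two hW2.1) v
  have hdeg1 : 0 < G.degree v := by
    rw [G.degree_pos_iff_exists_adj]
    obtain ⟨p⟩ := hconn.preconnected v y
    cases p with
    | nil => exact absurd rfl hy
    | cons h _ => exact ⟨_, h⟩
  have hdeg : G.degree v = 1 := by omega
  rw [SimpleGraph.degree] at hdeg
  obtain ⟨u, hu⟩ := Finset.card_eq_one.mp hdeg
  have hv : ∀ x, G.Adj v x → x = u := by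
    intro x hx
    have := (G.mem_neighborFinset v x).mpr hx
    rw [hu, Finset.mem_singleton] at this
    exact this
  have huv : G.Adj v u := by
    have : u ∈ G.neighborFinset v := by rw [hu]; exact Finset.mem_singleton_self u
    exact (G.mem_neighborFinset v u).mp this
  have hune : u ≠ v := (G.ne_of_adj huv).symm
  by_cases hucase : ∀ x, G.Adj u x → x = v
  · -- then G = K₂ = ⊤, contradiction
    have key : ∀ {a x : V}, G.Walk a x → (a = u ∨ a = v) → (x = u ∨ x = v) := by
      intro a x p
      induction p with
      | nil => exact id
      | cons h _ ih =>
        intro ha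
        apply ih
        rcases ha with ha | ha
        · right; exact hucase _ (ha ▸ h)
        · left; exact hv _ (ha ▸ h)
    have hall : ∀ x : V, x = u ∨ x = v := by
      intro x
      obtain ⟨p⟩ := hconn.preconnected u x
      exact key p (Or.inl rfl)
    apply hnc
    ext x z
    simp only [SimpleGraph.top_adj]
    constructor
    · exact G.ne_of_adj
    · intro hxz
      rcases hall x with hx | hx <;> rcases hall z with hz | hz
      · exact absurd (hx.trans hz.symm) hxz
      · exact hx ▸ hz ▸ huv.symm
      · exact hx ▸ hz ▸ huv
      · exact absurd (hx.trans hz.symm) hxz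
  · push_neg at hucase
    obtain ⟨w, huw, hwv⟩ := hucase
    have hwu : w ≠ u := fun h => G.loopless.irrefl u (h ▸ huw)
    have hindw : IsIndep G {w} := by
      intro a ha b hb
      rw [Finset.mem_singleton] at ha hb
      rw [ha, hb]; exact G.loopless.irrefl w
    have hindv : IsIndep G {v} := by
      intro a ha b hb
      rw [Finset.mem_singleton] at ha hb
      rw [ha, hb]; exact G.loopless.irrefl v
    obtain ⟨A', B', hwA, hvB, hdisj, hiA, _, hcardA, _⟩ :=
      hW2.2 {w} {v} hindw hindv (Finset.disjoint_singleton.mpr hwv)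
    have hwA' : w ∈ A' := hwA (Finset.mem_singleton_self w)
    have hvB' : v ∈ B' := hvB (Finset.mem_singleton_self v)
    have hvA' : v ∉ A' := fun h => (Finset.disjoint_left.mp hdisj h) hvB'
    by_cases huA : u ∈ A'
    · exact hiA huA hwA' huw
    · -- insert v A' is independent, contradicting maximality
      have hind : IsIndep G (insert v A') := by
        intro a ha b hb hab
        rw [Finset.mem_insert] at ha hb
        rcases ha with ha | ha <;> rcases hb with hb | hb
        · rw [ha, hb] at hab; exact G.loopless.irrefl v hab
        · rw [ha] at hab; exact huA ((hv b hab) ▸ hb)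
        · rw [hb] at hab; exact huA ((hv a hab.symm) ▸ ha)
        · exact hiA ha hb hab
      have hle := indep_card_le_s17 G _ hind
      rw [Finset.card_insert_of_notMem hvA', hcardA] at hle
      omega
end

section
/- The cycle C_n (n ≥ 3) is a W₂ graph if and only if n = 3 or n = 5. -/
open SimpleGraph

/- ### Auxiliary material -/

instance {V : Type*} (G : SimpleGraph V) [DecidableRel G.Adj] (s : Finset V) :
    Decidable (IsIndep G s) := by unfold IsIndep; infer_instance

lemma le_indepNum {V : Type*} [Fintype V] (G : SimpleGraph V) {s : Finset V}
    (h : IsIndep G s) : s.card ≤ _root_.indepNum G := by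
  apply le_csSup
  · exact ⟨Fintype.card V, by rintro k ⟨t, -, rfl⟩; exact Finset.card_le_univ t⟩
  · exact ⟨s, h, rfl⟩

lemma indepNum_eq_s18 {V : Type*} [Fintype V] (G : SimpleGraph V) (m : ℕ)
    (hub : ∀ s : Finset V, IsIndep G s → s.card ≤ m)
    (s : Finset V) (hs : IsIndep G s) (hc : s.card = m) : _root_.indepNum G = m := by
  refine le_antisymm (csSup_le ⟨m, s, hs, hc⟩ ?_) (hc ▸ le_indepNum G hs)
  rintro k ⟨t, ht, rfl⟩
  exact hub t ht

lemma fin_sub_val {n : ℕ} (u v : Fin n) :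
    (u - v).val = if v.val ≤ u.val then u.val - v.val else u.val + n - v.val := by
  rw [Fin.sub_def]
  have hu := u.isLt
  have hv := v.isLt
  simp only
  split_ifs with h
  · have e : n - v.val + u.val = n + (u.val - v.val) := by omega
    rw [e, Nat.add_mod_left, Nat.mod_eq_of_lt (by omega)]
  · rw [Nat.mod_eq_of_lt (by omega)]
    omega

lemma cycle_adj_val {n : ℕ} (hn : 2 ≤ n) (u v : Fin n) :
    (cycleGraph n).Adj u v ↔
      (u.val = v.val + 1 ∨ v.val = u.val + 1 ∨ u.val + n = v.val + 1 ∨ v.val + n = u.val + 1) := by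
  have hu := u.isLt
  have hv := v.isLt
  rw [cycleGraph_adj', fin_sub_val, fin_sub_val]
  split_ifs <;> omega

lemma indep_singleton {V : Type*} (G : SimpleGraph V) (a : V) : IsIndep G {a} := by
  intro u hu w hw hadj
  rw [Finset.mem_singleton] at hu hw
  subst hu; subst hw
  exact G.irrefl hadj

lemma indepNum_ge (n : ℕ) (hn : 3 ≤ n) : n / 2 ≤ _root_.indepNum (cycleGraph n) := by
  have hn0 : 0 < n := by omega
  have key : ∀ s : Finset (Fin n), s = (Finset.range (n / 2)).image
      (fun i => (⟨2 * i % n, Nat.mod_lt _ hn0⟩ : Fin n)) →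
      s.card = n / 2 ∧ IsIndep (cycleGraph n) s := by
    intro s hs
    have hval : ∀ i, i < n / 2 → 2 * i % n = 2 * i := fun i hi => Nat.mod_eq_of_lt (by omega)
    constructor
    · rw [hs, Finset.card_image_of_injOn, Finset.card_range]
      intro i hi j hj hij
      rw [Finset.mem_coe, Finset.mem_range] at hi hj
      have h2 := congrArg Fin.val hij
      simp only at h2
      rw [hval i hi, hval j hj] at h2
      omega
    · intro u hu w hw hadj
      rw [hs, Finset.mem_image] at hu hw
      obtain ⟨i, hi, rfl⟩ := hu
      obtain ⟨j, hj, rfl⟩ := hw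
      rw [Finset.mem_range] at hi hj
      rw [cycle_adj_val (by omega)] at hadj
      simp only at hadj
      rw [hval i hi, hval j hj] at hadj
      omega
  obtain ⟨hc, hi⟩ := key _ rfl
  exact hc ▸ le_indepNum _ hi

lemma not_w2_even (n : ℕ) (h4 : 4 ≤ n) (he : n % 2 = 0) : ¬ IsW2 (cycleGraph n) := by
  rintro ⟨-, hW⟩
  have hn2 : 2 ≤ n := by omega
  let v0 : Fin n := ⟨0, by omega⟩
  let v1 : Fin n := ⟨1, by omega⟩
  let v2 : Fin n := ⟨2, by omega⟩
  obtain ⟨A', B', hA, hB, hd, hiA, hiB, hcA, hcB⟩ :=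
    hW {v0} {v2} (indep_singleton _ _) (indep_singleton _ _)
      (by simp [Finset.disjoint_singleton, v0, v2, Fin.ext_iff])
  have h0 : v0 ∈ A' := hA (Finset.mem_singleton_self _)
  have h2 : v2 ∈ B' := hB (Finset.mem_singleton_self _)
  have hge : n / 2 ≤ _root_.indepNum (cycleGraph n) := indepNum_ge n (by omega)
  have hcard : (A' ∪ B').card = A'.card + B'.card := Finset.card_union_of_disjoint hd
  have hle : (A' ∪ B').card ≤ n := by
    simpa using Finset.card_le_univ (A' ∪ B')
  have huniv : A' ∪ B' = Finset.univ := by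
    apply Finset.eq_univ_of_card
    simp only [Fintype.card_fin]
    omega
  have h1 : v1 ∈ A' ∪ B' := huniv ▸ Finset.mem_univ _
  rcases Finset.mem_union.mp h1 with h | h
  · exact hiA h h0 ((cycle_adj_val hn2 v1 v0).mpr (by simp [v0, v1]))
  · exact hiB h2 h ((cycle_adj_val hn2 v2 v1).mpr (by simp [v1, v2]))

lemma not_w2_odd (n : ℕ) (h7 : 7 ≤ n) (ho : n % 2 = 1) : ¬ IsW2 (cycleGraph n) := by
  rintro ⟨-, hW⟩
  have hn2 : 2 ≤ n := by omega
  let v0 : Fin n := ⟨0, by omega⟩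
  let v1 : Fin n := ⟨1, by omega⟩
  let v2 : Fin n := ⟨2, by omega⟩
  let v3 : Fin n := ⟨3, by omega⟩
  let v4 : Fin n := ⟨4, by omega⟩
  let v5 : Fin n := ⟨5, by omega⟩
  have hBind : IsIndep (cycleGraph n) {v2, v5} := by
    intro u hu w hw hadj
    rw [Finset.mem_insert, Finset.mem_singleton] at hu hw
    rw [cycle_adj_val hn2] at hadj
    rcases hu with rfl | rfl <;> rcases hw with rfl | rfl <;>
      simp only [v2, v5] at hadj <;> omega
  obtain ⟨A', B', hA, hB, hd, hiA, hiB, hcA, hcB⟩ :=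
    hW {v0} {v2, v5} (indep_singleton _ _) hBind
      (by
        rw [Finset.disjoint_left]
        intro a ha hb
        rw [Finset.mem_singleton] at ha
        rw [Finset.mem_insert, Finset.mem_singleton] at hb
        subst ha
        rcases hb with h | h <;> exact absurd (congrArg Fin.val h) (by simp [v0, v2, v5]))
  have h0 : v0 ∈ A' := hA (Finset.mem_singleton_self _)
  have h2 : v2 ∈ B' := hB (by simp)
  have h5 : v5 ∈ B' := hB (by simp)
  have hge : n / 2 ≤ _root_.indepNum (cycleGraph n) := indepNum_ge n (by omega)
  have hcard : (A' ∪ B').card = A'.card + B'.card := Finset.card_union_of_disjoint hd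
  have adj' : ∀ a b : Fin n, a.val = b.val + 1 → (cycleGraph n).Adj a b := by
    intro a b hab
    rw [cycle_adj_val hn2]
    omega
  have h1A : v1 ∉ A' := fun h => hiA h h0 (adj' v1 v0 rfl)
  have h1B : v1 ∉ B' := fun h => hiB h2 h (adj' v2 v1 rfl)
  have key : ∃ x y : Fin n, x ≠ y ∧ x ∉ A' ∪ B' ∧ y ∉ A' ∪ B' := by
    by_cases h3 : v3 ∈ A'
    · refine ⟨v1, v4, by simp [v1, v4, Fin.ext_iff], ?_, ?_⟩
      · simp [Finset.mem_union, h1A, h1B]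
      · rw [Finset.mem_union]
        rintro (h | h)
        · exact hiA h h3 (adj' v4 v3 rfl)
        · exact hiB h5 h (adj' v5 v4 rfl)
    · refine ⟨v1, v3, by simp [v1, v3, Fin.ext_iff], ?_, ?_⟩
      · simp [Finset.mem_union, h1A, h1B]
      · rw [Finset.mem_union]
        rintro (h | h)
        · exact h3 h
        · exact hiB h h2 (adj' v3 v2 rfl)
  obtain ⟨x, y, hxy, hx, hy⟩ := key
  have hsub : A' ∪ B' ⊆ Finset.univ \ {x, y} := by
    intro z hz
    rw [Finset.mem_sdiff, Finset.mem_insert, Finset.mem_singleton]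
    refine ⟨Finset.mem_univ _, ?_⟩
    rintro (rfl | rfl)
    · exact hx hz
    · exact hy hz
  have hbound := Finset.card_le_card hsub
  have hcardxy : ({x, y} : Finset (Fin n)).card = 2 := by
    rw [Finset.card_insert_of_notMem (by simpa using hxy), Finset.card_singleton]
  rw [Finset.card_sdiff_of_subset (Finset.subset_univ _), hcardxy] at hbound
  simp only [Finset.card_univ, Fintype.card_fin] at hbound
  rw [hcard, hcA, hcB] at hbound
  omega

lemma w2_three : IsW2 (cycleGraph 3) := by
  have hα : _root_.indepNum (cycleGraph 3) = 1 :=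
    indepNum_eq_s18 _ 1 (by decide) {0} (by decide) rfl
  constructor
  · simp
  · rw [hα]; decide

lemma w2_five : IsW2 (cycleGraph 5) := by
  have hα : _root_.indepNum (cycleGraph 5) = 2 :=
    indepNum_eq_s18 _ 2 (by decide) {0, 2} (by decide) rfl
  constructor
  · simp
  · rw [hα]; decide

theorem stmt_18 (n : ℕ) (hn : 3 ≤ n) :
    IsW2 (SimpleGraph.cycleGraph n) ↔ n = 3 ∨ n = 5 := by
  constructor
  · intro hw
    by_contra h
    push_neg at h
    rcases Nat.even_or_odd n with he | ho
    · have he' : n % 2 = 0 := Nat.even_iff.mp he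
      exact not_w2_even n (by omega) he' hw
    · have ho' : n % 2 = 1 := Nat.odd_iff.mp ho
      exact not_w2_odd n (by omega) ho' hw
  · rintro (rfl | rfl)
    · exact w2_three
    · exact w2_five
end

section
/- For n ≥ 3 and a with 2n/gcd(a,2n) = 3 and 1 ≤ a < n, the circulant graph C_{2n}(a,n) is isomorphic to a disjoint union of gcd(a,2n)/2 copies of the complement of the 6-cycle. -/
open SimpleGraph

lemma key (m : ℕ) (c : ℕ) (r r' : Fin m) (s s' : ZMod 6) :
    ((r.val + m * s.val : ℕ) : ZMod (2 * (3 * m))) = ((m * c + (r'.val + m * s'.val) : ℕ) : ZMod (2 * (3 * m)))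
      ↔ r = r' ∧ s = s' + (c : ZMod 6) := by
  have hr := r.isLt
  have hr' := r'.isLt
  have hs := ZMod.val_lt s
  have hs' := ZMod.val_lt s'
  rw [ZMod.natCast_eq_natCast_iff, Nat.modEq_iff_dvd]
  constructor
  · rintro ⟨k, hk⟩
    push_cast at hk
    set t : ℤ := 6 * k - (s'.val + c - s.val) with ht
    have h1 : (r'.val : ℤ) - r.val = m * t := by rw [ht]; ring_nf; linarith [hk]
    have ht0 : t = 0 := by
      rcases lt_trichotomy t 0 with h | h | h
      · nlinarith [h1]
      · exact h
      · nlinarith [h1]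
    rw [ht0, mul_zero] at h1
    have hrr : r = r' := by
      apply Fin.ext
      omega
    refine ⟨hrr, ?_⟩
    have h2 : (s'.val + c - s.val : ℤ) = 6 * k := by omega
    have : ((s.val : ℕ) : ZMod 6) = ((s'.val + c : ℕ) : ZMod 6) := by
      rw [ZMod.natCast_eq_natCast_iff, Nat.modEq_iff_dvd]
      exact ⟨k, by push_cast; linarith⟩
    simpa [ZMod.natCast_val, ZMod.cast_id] using this
  · rintro ⟨rfl, hss⟩
    have hval : s.val % 6 = (s'.val + c) % 6 := by
      have : s = ((s'.val + c : ℕ) : ZMod 6) := by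
        push_cast
        simpa [ZMod.natCast_val, ZMod.cast_id] using hss
      rw [this, ZMod.val_natCast]
      omega
    obtain ⟨j, hj⟩ : (6 : ℤ) ∣ ((s'.val + c : ℤ) - s.val) := by
      rw [Int.dvd_iff_emod_eq_zero]; omega
    exact ⟨j, by push_cast; linear_combination (m:ℤ) * hj⟩

lemma z6 : ∀ s s' : ZMod 6,
    (¬(s = s') ∧ ((s = s' + ((2:ℕ):ZMod 6) ∨ s = s' + ((3:ℕ):ZMod 6)) ∨
        (s' = s + ((2:ℕ):ZMod 6) ∨ s' = s + ((3:ℕ):ZMod 6)))) ↔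
      (¬(s = s') ∧ ((s - s' = 2 ∨ s - s' = 3) ∨ (s' - s = 2 ∨ s' - s = 3))) := by
  decide

private lemma main (m : ℕ) (hm : 1 ≤ m) :
    Nonempty (circ (2 * (3 * m)) {2 * m, 3 * m} ≃g copies m (circ 6 {2, 3})) := by
  haveI : NeZero (2 * (3 * m)) := ⟨by omega⟩
  set N := 2 * (3 * m) with hN
  let f : Fin m × ZMod 6 → ZMod N := fun p => ((p.1.val + m * p.2.val : ℕ) : ZMod N)
  have hinj : Function.Injective f := by
    rintro ⟨r, s⟩ ⟨r', s'⟩ hfe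
    have := (key m 0 r r' s s').mp (by rw [Nat.mul_zero, Nat.zero_add]; exact hfe)
    simp only [Nat.cast_zero, add_zero] at this
    exact Prod.ext this.1 this.2
  have hbij : Function.Bijective f := by
    rw [Fintype.bijective_iff_injective_and_card]
    refine ⟨hinj, ?_⟩
    simp [ZMod.card, hN]
    ring
  have hadj : ∀ p q : Fin m × ZMod 6,
      (circ N {2 * m, 3 * m}).Adj (f p) (f q) ↔ (copies m (circ 6 {2, 3})).Adj p q := by
    rintro ⟨r, s⟩ ⟨r', s'⟩
    have hmem : ∀ z : ZMod N, z ∈ ((fun s : ℕ => (s : ZMod N)) '' {2 * m, 3 * m}) ↔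
        (z = ((2 * m : ℕ) : ZMod N) ∨ z = ((3 * m : ℕ) : ZMod N)) := by
      intro z
      simp [Set.mem_image]
      tauto
    have hsub : ∀ (c : ℕ) (r r' : Fin m) (s s' : ZMod 6),
        f (r, s) - f (r', s') = ((m * c : ℕ) : ZMod N) ↔ (r = r' ∧ s = s' + (c : ZMod 6)) := by
      intro c r r' s s'
      rw [sub_eq_iff_eq_add, ← Nat.cast_add]
      exact key m c r r' s s'
    have hne : ¬ f (r, s) = f (r', s') ↔ ¬(r = r' ∧ s = s') := by
      constructor
      · intro h hc; exact h (by rw [hc.1, hc.2])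
      · intro h hc; exact h (by have := hinj hc; exact ⟨congrArg Prod.fst this, congrArg Prod.snd this⟩)
    have hmem6 : ∀ z : ZMod 6, z ∈ ((fun s : ℕ => (s : ZMod 6)) '' {2, 3}) ↔
        (z = (2 : ZMod 6) ∨ z = (3 : ZMod 6)) := by
      intro z
      simp [Set.mem_image, eq_comm]
    simp only [circ, circulantGraph, fromRel_adj, hmem, hmem6, copies, ne_eq]
    have e2 : ((2 * m : ℕ) : ZMod N) = ((m * 2 : ℕ) : ZMod N) := by rw [Nat.mul_comm]
    have e3 : ((3 * m : ℕ) : ZMod N) = ((m * 3 : ℕ) : ZMod N) := by rw [Nat.mul_comm]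
    rw [e2, e3, hsub 2, hsub 2, hsub 3, hsub 3, hne]
    have hz6 := z6 s s'
    constructor
    · rintro ⟨h1, h2⟩
      have hrr : r = r' := by
        rcases h2 with (⟨h, -⟩ | ⟨h, -⟩) | (⟨h, -⟩ | ⟨h, -⟩)
        · exact h
        · exact h
        · exact h.symm
        · exact h.symm
      subst hrr
      refine ⟨rfl, ?_⟩
      have h3 : ¬ s = s' := fun hss => h1 ⟨rfl, hss⟩
      have h4 : (s = s' + ((2:ℕ):ZMod 6) ∨ s = s' + ((3:ℕ):ZMod 6)) ∨
          (s' = s + ((2:ℕ):ZMod 6) ∨ s' = s + ((3:ℕ):ZMod 6)) := by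
        rcases h2 with (⟨-, h⟩ | ⟨-, h⟩) | (⟨-, h⟩ | ⟨-, h⟩)
        · exact Or.inl (Or.inl h)
        · exact Or.inl (Or.inr h)
        · exact Or.inr (Or.inl h)
        · exact Or.inr (Or.inr h)
      exact hz6.mp ⟨h3, h4⟩
    · rintro ⟨hrr, hadj'⟩
      subst hrr
      have h5 := hz6.mpr ⟨hadj'.1, hadj'.2⟩
      refine ⟨fun hc => h5.1 hc.2, ?_⟩
      rcases h5.2 with (h | h) | (h | h)
      · exact Or.inl (Or.inl ⟨rfl, h⟩)
      · exact Or.inl (Or.inr ⟨rfl, h⟩)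
      · exact Or.inr (Or.inl ⟨rfl, h⟩)
      · exact Or.inr (Or.inr ⟨rfl, h⟩)
  exact ⟨(RelIso.mk (Equiv.ofBijective f hbij) (fun {p q} => hadj p q)).symm⟩

theorem stmt_19 (n a : ℕ) (hn : 3 ≤ n) (ha : 1 ≤ a) (han : a < n)
    (h : 2 * n / Nat.gcd a (2 * n) = 3) :
    Nonempty (circ (2 * n) {a, n} ≃g
      copies (Nat.gcd a (2 * n) / 2) (circ 6 {2, 3})) := by
  have hd_dvd_a : Nat.gcd a (2 * n) ∣ a := Nat.gcd_dvd_left _ _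
  have hd_dvd : Nat.gcd a (2 * n) ∣ 2 * n := Nat.gcd_dvd_right _ _
  have hdpos : 0 < Nat.gcd a (2 * n) := Nat.gcd_pos_of_pos_left _ ha
  have h3d : 2 * n = 3 * Nat.gcd a (2 * n) := by
    have := Nat.eq_mul_of_div_eq_right hd_dvd h
    omega
  have had : a = Nat.gcd a (2 * n) := by
    obtain ⟨u, hu⟩ := hd_dvd_a
    have h2a : 2 * a < 3 * Nat.gcd a (2 * n) := by omega
    have hu2 : u < 2 := by nlinarith
    have hu0 : u ≠ 0 := by rintro rfl; omega
    have hu1 : u = 1 := by omega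
    rw [hu1, mul_one] at hu
    exact hu
  have h2n3a : 2 * n = 3 * a := by omega
  obtain ⟨m, rfl, rfl⟩ : ∃ m, a = 2 * m ∧ n = 3 * m := ⟨a / 2, by omega, by omega⟩
  have hg : Nat.gcd (2 * m) (2 * (3 * m)) / 2 = m := by
    rw [Nat.gcd_eq_left ⟨3, by ring⟩]
    omega
  rw [hg]
  exact main m (by omega)
end
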